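/- Let μ : [0,∞) → ℝ satisfy m(t−s) ≤ μ(t)t − μ(s)s ≤ M(t−s) for all t ≥ s ≥ 0, with positive constants m, M. Then there exists a constant C₂ > 0 such that for all vectors v, w ∈ ℝ², (μ(|v|)v − μ(|w|)w) · (v − w) ≥ C₂|v − w|². -/

import Mathlib

open scoped RealInnerProductSpace

private lemma expand_inner (a b : ℝ) (v w : EuclideanSpace ℝ (Fin 2)) :
    ⟪a • v - b • w, v - w⟫ = a * ‖v‖ ^ 2 + b * ‖w‖ ^ 2 - (a + b) * ⟪v, w⟫ := by
  simp only [inner_sub_left, inner_sub_right, real_inner_smul_left,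
    real_inner_self_eq_norm_sq, real_inner_comm w v]
  ring

private lemma key_lemma (μ : ℝ → ℝ) (m : ℝ) (hm : 0 < m)
    (h : ∀ s t : ℝ, 0 ≤ s → s ≤ t →
      m * (t - s) ≤ μ t * t - μ s * s)
    (v w : EuclideanSpace ℝ (Fin 2)) (hba : ‖w‖ ≤ ‖v‖) :
    m * ‖v - w‖ ^ 2 ≤ ⟪μ ‖v‖ • v - μ ‖w‖ • w, v - w⟫ := by
  set a := ‖v‖ with ha
  set b := ‖w‖ with hb
  have ha0 : 0 ≤ a := norm_nonneg v
  have hb0 : 0 ≤ b := norm_nonneg w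
  have hφa : m * a ≤ μ a * a := by
    have := h 0 a le_rfl ha0; simpa using this
  have hφb : m * b ≤ μ b * b := by
    have := h 0 b le_rfl hb0; simpa using this
  have hφab : m * (a - b) ≤ μ a * a - μ b * b := h b a hb0 hba
  have hc : ⟪v, w⟫ ≤ a * b := real_inner_le_norm v w
  have hns : ‖v - w‖ ^ 2 = a ^ 2 - 2 * ⟪v, w⟫ + b ^ 2 := by
    rw [norm_sub_sq_real]
  rw [expand_inner, hns]
  rcases eq_or_lt_of_le hb0 with hb0' | hb0'
  · -- b = 0
    have hw : w = 0 := by exact norm_eq_zero.mp (hb ▸ hb0'.symm)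
    have hc0 : ⟪v, w⟫ = 0 := by simp [hw]
    rw [hc0]
    nlinarith [mul_nonneg ha0 (sub_nonneg.2 hφa)]
  · -- 0 < b ≤ a
    have ha0' : 0 < a := lt_of_lt_of_le hb0' hba
    have hμa : m ≤ μ a := by
      have := (mul_le_mul_iff_left₀ ha0').mp hφa; linarith
    have hμb : m ≤ μ b := by
      have := (mul_le_mul_iff_left₀ hb0').mp hφb; linarith
    nlinarith [mul_nonneg (sub_nonneg.2 hba) (sub_nonneg.2 hφab),
      mul_nonneg (sub_nonneg.2 hc) (by linarith : (0:ℝ) ≤ μ a + μ b - 2 * m)]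

theorem stmt_2 (μ : ℝ → ℝ) (hcont : ContinuousOn μ (Set.Ici 0)) (m M : ℝ)
    (hm : 0 < m) (hM : 0 < M)
    (h : ∀ s t : ℝ, 0 ≤ s → s ≤ t →
      m * (t - s) ≤ μ t * t - μ s * s ∧ μ t * t - μ s * s ≤ M * (t - s)) :
    ∃ C₂ > (0 : ℝ), ∀ v w : EuclideanSpace ℝ (Fin 2),
      C₂ * ‖v - w‖ ^ 2 ≤ ⟪μ ‖v‖ • v - μ ‖w‖ • w, v - w⟫ := by
  refine ⟨m, hm, fun v w => ?_⟩
  have h' : ∀ s t : ℝ, 0 ≤ s → s ≤ t → m * (t - s) ≤ μ t * t - μ s * s :=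
    fun s t hs hst => (h s t hs hst).1
  rcases le_total ‖w‖ ‖v‖ with hba | hba
  · exact key_lemma μ m hm h' v w hba
  · have := key_lemma μ m hm h' w v hba
    have e1 : ⟪μ ‖v‖ • v - μ ‖w‖ • w, v - w⟫ = ⟪μ ‖w‖ • w - μ ‖v‖ • v, w - v⟫ := by
      rw [← inner_neg_neg]; congr 1 <;> abel
    have e2 : ‖v - w‖ = ‖w - v‖ := norm_sub_rev v w
    rw [e1, e2]
    exact this
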